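/- arXiv:1507.02556 — 2 statements merged into one kernel-verified Lean document; each statement's English description precedes it below -/
import Mathlib

section
/- Let (R, m) be a Noetherian local ring and let a₁, …, a_d ∈ m be an R-regular sequence generating an ideal Q with Q ⊆ m². Then the multiplication map σ : m ⊗_R Q → mQ, x ⊗ y ↦ xy, has kernel contained in m·(m ⊗_R Q); consequently μ_R(mQ) = d·μ_R(m), where μ_R denotes the minimal number of generators. -/
open IsLocalRing TensorProduct

noncomputable section

/-- The minimal number of generators of a module. -/
def mu (R : Type) [CommRing R] (M : Type) [AddCommGroup M] [Module R M] : ℕ :=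
  sInf {n : ℕ | ∃ s : Finset M, s.card = n ∧ Submodule.span R (s : Set M) = ⊤}

/-- The length of a module (as a natural number), defined as the Krull dimension of its
lattice of submodules. -/
def lengthNat (R : Type) [CommRing R] (M : Type) [AddCommGroup M] [Module R M] : ℕ :=
  (WithBot.unbotD 0 (Order.krullDim (Submodule R M))).toNat

/-- The (Krull) dimension of a module. -/
def moduleDim (R : Type) [CommRing R] (M : Type) [AddCommGroup M] [Module R M] : WithBot ℕ∞ :=
  ringKrullDim (R ⧸ Module.annihilator R M)

open Filter in
/-- The Hilbert–Samuel multiplicity `e(J, M)` of a module `M` with respect to an ideal `J`. -/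
def eMult (R : Type) [CommRing R] (J : Ideal R) (M : Type) [AddCommGroup M] [Module R M] : ℕ :=
  sInf {e : ℕ | ∃ d : ℕ, moduleDim R M = (d : ℕ∞) ∧
    Tendsto (fun n : ℕ =>
        ((d.factorial : ℝ) * (lengthNat R (M ⧸ (J ^ n • ⊤ : Submodule R M)))) / (n : ℝ) ^ d)
      atTop (nhds (e : ℝ))}

/-- A parameter ideal of a local ring: an ideal generated by a system of parameters. -/
def Ideal.IsParameterIdeal {R : Type} [CommRing R] [IsLocalRing R] (Q : Ideal R) : Prop :=
  ∃ (d : ℕ) (a : Fin d → R), ringKrullDim R = (d : ℕ) ∧ Q = Ideal.span (Set.range a) ∧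
    Q ≤ maximalIdeal R ∧ maximalIdeal R ≤ Q.radical

/-- A subsystem of parameters: a family extendable to a full system of parameters. -/
def IsSubsystemOfParameters {R : Type} [CommRing R] [IsLocalRing R] {r : ℕ}
    (a : Fin r → R) : Prop :=
  ∃ (d : ℕ) (hrd : r ≤ d) (b : Fin d → R), ringKrullDim R = (d : ℕ) ∧
    (∀ i : Fin r, b (Fin.castLE hrd i) = a i) ∧
    (Ideal.span (Set.range b)).IsParameterIdeal

/-- A Noetherian local ring is Cohen–Macaulay iff it admits a regular sequence in the maximal
ideal whose length is the Krull dimension. -/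
def IsCohenMacaulayLocalRing (R : Type) [CommRing R] [IsLocalRing R] : Prop :=
  IsNoetherianRing R ∧
    ∃ (d : ℕ) (a : Fin d → R), ringKrullDim R = (d : ℕ) ∧
      (∀ i, a i ∈ maximalIdeal R) ∧ RingTheory.Sequence.IsRegular R (List.ofFn a)

open CategoryTheory in
/-- The `i`-th Ext module of two modules over `R`. -/
def extGp (R : Type) [CommRing R] (M N : Type) [AddCommGroup M] [Module R M]
    [AddCommGroup N] [Module R N] (i : ℕ) : ModuleCat R :=
  ((Ext R (ModuleCat R) i).obj (Opposite.op (ModuleCat.of R M))).obj (ModuleCat.of R N)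

/-- A canonical module of a (Cohen–Macaulay) Noetherian local ring `R`, characterized by
`Ext^i(k, K) = 0` for `i ≠ d` and `Ext^d(k, K) ≅ k`, where `d = dim R`. -/
def IsCanonicalModule (R : Type) [CommRing R] [IsLocalRing R]
    (M : Type) [AddCommGroup M] [Module R M] : Prop :=
  Module.Finite R M ∧ ∃ d : ℕ, ringKrullDim R = (d : ℕ) ∧
    (∀ i : ℕ, i ≠ d → Subsingleton (extGp R (ResidueField R) M i)) ∧
    Nonempty ((extGp R (ResidueField R) M d) ≃ₗ[R] ResidueField R)

/-- Gorenstein local ring. -/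
def IsGorensteinLocalRing (R : Type) [CommRing R] [IsLocalRing R] : Prop :=
  IsNoetherianRing R ∧ IsCanonicalModule R R

/-- A commutative ring is Gorenstein if all its localizations at primes are Gorenstein
local rings. -/
def IsGorensteinRing (S : Type) [CommRing S] : Prop :=
  ∀ (P : Ideal S) (hP : P.IsPrime), letI := hP; IsGorensteinLocalRing (Localization.AtPrime P)

/-- Regular local ring: Noetherian local and the maximal ideal is generated by `dim R`
elements. -/
def IsRegularLocalRingP (R : Type) [CommRing R] [IsLocalRing R] : Prop :=
  IsNoetherianRing R ∧ ringKrullDim R = (mu R (maximalIdeal R) : ℕ)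

/-- The Cohen–Macaulay type: the minimal number of generators of a canonical module. -/
def CMtype (R : Type) [CommRing R] [IsLocalRing R] : ℕ :=
  sInf {t : ℕ | ∃ K : ModuleCat.{0} R, IsCanonicalModule R K ∧ mu R K = t}

/-- Almost Gorenstein local ring (Goto–Takahashi–Taniguchi): there is an embedding
`R ↪ K_R` into a canonical module whose cokernel `C` satisfies `μ(C) = e⁰_𝔪(C)`. -/
def IsAlmostGorensteinLocalRing (R : Type) [CommRing R] [IsLocalRing R] : Prop :=
  IsNoetherianRing R ∧ IsCohenMacaulayLocalRing R ∧
  ∃ (K : ModuleCat.{0} R), IsCanonicalModule R K ∧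
    ∃ f : R →ₗ[R] K, Function.Injective f ∧
      mu R (K ⧸ LinearMap.range f) = eMult R (maximalIdeal R) (K ⧸ LinearMap.range f)

/-- `pd_R M ≤ n`, via vanishing of Ext. -/
def projDimLE (R : Type) [CommRing R] (M : Type) [AddCommGroup M] [Module R M] (n : ℕ) : Prop :=
  ∀ (N : ModuleCat.{0} R) (i : ℕ), n < i → Subsingleton (extGp R M N i)

/-- The ideal `J` contains a regular sequence of length `g`. -/
def hasGradeGE (R : Type) [CommRing R] (J : Ideal R) (g : ℕ) : Prop :=
  ∃ a : Fin g → R, (∀ i, a i ∈ J) ∧ RingTheory.Sequence.IsRegular R (List.ofFn a)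

/-- The ideal `J` has grade `g`. -/
def hasGrade (R : Type) [CommRing R] (J : Ideal R) (g : ℕ) : Prop :=
  hasGradeGE R J g ∧ ¬ hasGradeGE R J (g + 1)

/-- `J` is a perfect ideal of grade `g`: `grade J = pd_R (R/J) = g`. -/
def IsPerfectIdealOfGrade (R : Type) [CommRing R] (J : Ideal R) (g : ℕ) : Prop :=
  hasGrade R J g ∧ projDimLE R (R ⧸ J) g ∧ ∀ m : ℕ, projDimLE R (R ⧸ J) m → g ≤ m

end

open Pointwise

section Aux

lemma ofList_ofFn_eq {R : Type} [CommRing R] {d : ℕ} (a : Fin d → R) :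
    Ideal.ofList (List.ofFn a) = Ideal.span (Set.range a) := by
  unfold Ideal.ofList
  congr 1
  ext r
  simp [List.mem_ofFn]

lemma syz {R : Type} [CommRing R] : ∀ (d : ℕ) (a : Fin d → R),
    RingTheory.Sequence.IsWeaklyRegular R (List.ofFn a) →
    ∀ x : Fin d → R, (∑ i, x i * a i) = 0 → ∀ j, x j ∈ Ideal.span (Set.range a) := by
  intro d
  induction d with
  | zero => intro a _ x _ j; exact j.elim0
  | succ e ih =>
    intro a hreg x hsum j
    set a' : Fin e → R := fun i => a i.castSucc with ha'
    set b : R := a (Fin.last e) with hb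
    have hofn : List.ofFn a = List.ofFn a' ++ [b] := by
      rw [List.ofFn_succ' a]; simp [List.concat_eq_append, ha', hb]
    rw [hofn, RingTheory.Sequence.isWeaklyRegular_append_iff] at hreg
    obtain ⟨hreg', hregb⟩ := hreg
    rw [RingTheory.Sequence.isWeaklyRegular_singleton_iff] at hregb
    set I : Ideal R := Ideal.span (Set.range a') with hI
    have hIle : I ≤ Ideal.span (Set.range a) := by
      apply Ideal.span_mono
      rintro _ ⟨i, rfl⟩; exact ⟨i.castSucc, rfl⟩
    have hble : b ∈ Ideal.span (Set.range a) :=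
      Ideal.subset_span ⟨Fin.last e, rfl⟩
    have hsum' : (∑ i : Fin e, x i.castSucc * a' i) + x (Fin.last e) * b = 0 := by
      rw [← hsum, Fin.sum_univ_castSucc]
    have hxb : x (Fin.last e) * b ∈ I := by
      rw [show x (Fin.last e) * b = -(∑ i : Fin e, x i.castSucc * a' i) from
        eq_neg_of_add_eq_zero_right hsum']
      exact neg_mem (Ideal.sum_mem _ fun i _ => Ideal.mul_mem_left _ _
        (Ideal.subset_span ⟨i, rfl⟩))
    have hIsmul : (Ideal.ofList (List.ofFn a') • ⊤ : Submodule R R) = I := by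
      rw [ofList_ofFn_eq, smul_eq_mul, Ideal.mul_top]
    have hxlast : x (Fin.last e) ∈ I := by
      have h0 : b • (Submodule.Quotient.mk (p := (Ideal.ofList (List.ofFn a') • ⊤ : Submodule R R))
          (x (Fin.last e))) = 0 := by
        rw [← Submodule.Quotient.mk_smul, Submodule.Quotient.mk_eq_zero, hIsmul]
        rw [smul_eq_mul, mul_comm]; exact hxb
      have := hregb (h0.trans (smul_zero b).symm)
      rwa [Submodule.Quotient.mk_eq_zero, hIsmul] at this
    obtain ⟨c, hc⟩ := (Submodule.mem_span_range_iff_exists_fun R).mp hxlast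
    simp only [smul_eq_mul] at hc
    set x' : Fin e → R := fun i => x i.castSucc + c i * b with hx'
    have hsum'' : (∑ i, x' i * a' i) = 0 := by
      have : (∑ i, x' i * a' i) = (∑ i : Fin e, x i.castSucc * a' i) + (∑ i, c i * a' i) * b := by
        rw [Finset.sum_mul, ← Finset.sum_add_distrib]
        congr 1; ext i; ring
      rw [this, hc]
      linear_combination hsum'
    have hind : ∀ i : Fin e, x' i ∈ I := fun i => ih a' hreg' x' hsum'' i
    induction j using Fin.lastCases with
    | last => exact hIle hxlast
    | cast i =>
      have : x i.castSucc = x' i - c i * b := by rw [hx']; ring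
      rw [this]
      exact sub_mem (hIle (hind i)) (Ideal.mul_mem_left _ _ hble)

variable {R : Type} [CommRing R]

lemma mem_smul_top_of_mem_mul (I J : Ideal R) {y : R} (h2 : y ∈ I * J) (hy : y ∈ J) :
    (⟨y, hy⟩ : J) ∈ (I • ⊤ : Submodule R J) :=
  (Submodule.mem_smul_top_iff I J _).mpr (by rwa [smul_eq_mul])

variable [IsLocalRing R]

lemma span_quot_top {M : Type} [AddCommGroup M] [Module R M]
    (S : Set (M ⧸ (maximalIdeal R • ⊤ : Submodule R M))) :
    Submodule.span R S = ⊤ ↔ Submodule.span (R ⧸ maximalIdeal R) S = ⊤ := by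
  rw [← Submodule.restrictScalars_span R (R ⧸ maximalIdeal R) Ideal.Quotient.mk_surjective,
    Submodule.restrictScalars_eq_top_iff]

lemma span_range_iff_quot {M : Type} [AddCommGroup M] [Module R M] [Module.Finite R M]
    {ι : Type} (f : ι → M) :
    Submodule.span R (Set.range f) = ⊤ ↔
      Submodule.span (R ⧸ maximalIdeal R)
        (Set.range fun i => Submodule.mkQ (maximalIdeal R • ⊤ : Submodule R M) (f i)) = ⊤ := by
  rw [← IsLocalRing.map_mkQ_eq_top (N := Submodule.span R (Set.range f)),
    Submodule.map_span, ← Set.range_comp, span_quot_top]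
  rfl

lemma mu_eq_finrank (M : Type) [AddCommGroup M] [Module R M] [Module.Finite R M] :
    mu R M = Module.finrank (R ⧸ maximalIdeal R)
      (M ⧸ (maximalIdeal R • ⊤ : Submodule R M)) := by
  classical
  letI : Field (R ⧸ maximalIdeal R) := Ideal.Quotient.field _
  haveI : Module.Finite (R ⧸ maximalIdeal R) (M ⧸ (maximalIdeal R • ⊤ : Submodule R M)) :=
    Module.Finite.of_restrictScalars_finite R _ _
  have hsurj : Function.Surjective (Submodule.mkQ (maximalIdeal R • ⊤ : Submodule R M)) :=
    Submodule.mkQ_surjective _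
  apply le_antisymm
  · have b := Module.finBasis (R ⧸ maximalIdeal R) (M ⧸ (maximalIdeal R • ⊤ : Submodule R M))
    have f : {f : Fin (Module.finrank (R ⧸ maximalIdeal R)
        (M ⧸ (maximalIdeal R • ⊤ : Submodule R M))) → M //
        ∀ i, Submodule.mkQ _ (f i) = b i} :=
      ⟨fun i => Function.surjInv hsurj (b i), fun i => Function.surjInv_eq hsurj _⟩
    obtain ⟨f, hfb⟩ := f
    have hfinj : Function.Injective f := by
      intro i j hij
      apply b.injective
      rw [← hfb, ← hfb, hij]
    have hspan : Submodule.span R (Set.range f) = ⊤ := by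
      rw [span_range_iff_quot]
      have h2 : (fun i => Submodule.mkQ (maximalIdeal R • ⊤ : Submodule R M) (f i)) = ⇑b :=
        funext hfb
      rw [h2, b.span_eq]
    apply Nat.sInf_le
    refine ⟨Finset.univ.image f, ?_, ?_⟩
    · rw [Finset.card_image_of_injective _ hfinj, Finset.card_univ, Fintype.card_fin]
    · rw [Finset.coe_image, Finset.coe_univ, Set.image_univ, hspan]
  · have hne : {c : ℕ | ∃ s : Finset M, s.card = c ∧
        Submodule.span R (s : Set M) = ⊤}.Nonempty := by
      obtain ⟨s, hs⟩ := Module.Finite.fg_top (R := R) (M := M)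
      exact ⟨s.card, s, rfl, hs⟩
    obtain ⟨s, hcard, hspan⟩ := Nat.sInf_mem hne
    have hspanq : Submodule.span (R ⧸ maximalIdeal R)
        (Set.range fun i : s => Submodule.mkQ (maximalIdeal R • ⊤ : Submodule R M) i) = ⊤ := by
      rw [← span_quot_top]
      have h3 : (Set.range fun i : s => Submodule.mkQ (maximalIdeal R • ⊤ : Submodule R M) i)
          = Submodule.mkQ (maximalIdeal R • ⊤ : Submodule R M) '' s := by
        ext y; simp [Set.mem_image]
      rw [h3, ← Submodule.map_span, hspan, Submodule.map_top, Submodule.range_mkQ]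
    calc Module.finrank (R ⧸ maximalIdeal R) (M ⧸ (maximalIdeal R • ⊤ : Submodule R M))
        ≤ Fintype.card s := finrank_le_of_span_eq_top hspanq
    _ = s.card := Fintype.card_coe s
    _ = mu R M := hcard

end Aux

set_option maxHeartbeats 1000000 in
theorem mu_maximalIdeal_mul_parameter
    (R : Type) [CommRing R] [IsLocalRing R] [IsNoetherianRing R]
    (d : ℕ) (a : Fin d → R) (ha : ∀ i, a i ∈ maximalIdeal R)
    (hreg : RingTheory.Sequence.IsRegular R (List.ofFn a))
    (Q : Ideal R) (hQ : Q = Ideal.span (Set.range a))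
    (hQm : Q ≤ maximalIdeal R ^ 2) :
    LinearMap.ker (TensorProduct.lift ((LinearMap.mul R R).compl₁₂
        (maximalIdeal R).subtype Q.subtype))
      ≤ maximalIdeal R • (⊤ : Submodule R (↥(maximalIdeal R) ⊗[R] ↥Q)) ∧
    mu R ↥(maximalIdeal R * Q) = d * mu R ↥(maximalIdeal R) := by
  classical
  letI : Field (R ⧸ maximalIdeal R) := Ideal.Quotient.field _
  have hweak : RingTheory.Sequence.IsWeaklyRegular R (List.ofFn a) :=
    ((RingTheory.Sequence.isRegular_iff R _).mp hreg).1
  have haQ : ∀ i, a i ∈ Q := fun i => hQ ▸ Ideal.subset_span ⟨i, rfl⟩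
  have hQmm : Q ≤ maximalIdeal R * maximalIdeal R := by rwa [← pow_two]
  set av : Fin d → ↥Q := fun i => (⟨a i, haQ i⟩ : ↥Q) with hav
  -- representation of tensors
  have hrep : ∀ t : ↥(maximalIdeal R) ⊗[R] ↥Q, ∃ xv : Fin d → ↥(maximalIdeal R), t = ∑ i, xv i ⊗ₜ[R] av i := by
    intro t
    induction t with
    | zero =>
      exact ⟨0, by simp⟩
    | tmul u v =>
      have hv2 : (v : R) ∈ Ideal.span (Set.range a) := by rw [← hQ]; exact v.2
      obtain ⟨c, hc⟩ := (Submodule.mem_span_range_iff_exists_fun R).mp hv2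
      refine ⟨fun i => c i • u, ?_⟩
      have hv : v = ∑ i, c i • av i := by
        apply Subtype.ext
        push_cast
        simp only [SetLike.val_smul, smul_eq_mul]
        exact hc.symm
      rw [hv, tmul_sum]
      exact Finset.sum_congr rfl fun i _ => (smul_tmul (c i) u (av i)).symm
    | add t₁ t₂ ih₁ ih₂ =>
      obtain ⟨x₁, h₁⟩ := ih₁
      obtain ⟨x₂, h₂⟩ := ih₂
      exact ⟨x₁ + x₂, by simp [h₁, h₂, add_tmul, Finset.sum_add_distrib]⟩
  constructor
  · -- Part 1 : kernel ≤ m • ⊤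
    intro t ht
    obtain ⟨xv, rfl⟩ := hrep t
    rw [LinearMap.mem_ker] at ht
    have hσ : (∑ i, (xv i : R) * a i) = 0 := by
      simpa using ht
    have hxQ : ∀ i, (xv i : R) ∈ maximalIdeal R * maximalIdeal R := fun i =>
      hQmm (hQ ▸ syz d a hweak (fun j => (xv j : R)) hσ i)
    apply Submodule.sum_mem
    intro i _
    have hx : xv i ∈ (maximalIdeal R • ⊤ : Submodule R ↥(maximalIdeal R)) :=
      (Submodule.mem_smul_top_iff (maximalIdeal R) (maximalIdeal R) (xv i)).mpr (by rw [smul_eq_mul]; exact hxQ i)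
    have hmem : ((TensorProduct.mk R ↥(maximalIdeal R) ↥Q).flip (av i)) (xv i) ∈
        Submodule.map ((TensorProduct.mk R ↥(maximalIdeal R) ↥Q).flip (av i))
          (maximalIdeal R • ⊤) :=
      Submodule.mem_map_of_mem hx
    rw [Submodule.map_smul''] at hmem
    exact Submodule.smul_mono le_rfl le_top hmem
  · -- Part 2 : mu computation
    haveI hmfin : Module.Finite R ↥(maximalIdeal R) :=
      Module.Finite.iff_fg.mpr (IsNoetherian.noetherian _)
    haveI hmQfin : Module.Finite R ↥(maximalIdeal R * Q) :=
      Module.Finite.iff_fg.mpr (IsNoetherian.noetherian _)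
    haveI : Module.Finite (R ⧸ maximalIdeal R)
        (↥(maximalIdeal R) ⧸ (maximalIdeal R • ⊤ : Submodule R ↥(maximalIdeal R))) :=
      Module.Finite.of_restrictScalars_finite R _ _
    set n : ℕ := Module.finrank (R ⧸ maximalIdeal R)
      (↥(maximalIdeal R) ⧸ (maximalIdeal R • ⊤ : Submodule R ↥(maximalIdeal R))) with hn
    have bm := Module.finBasis (R ⧸ maximalIdeal R)
      (↥(maximalIdeal R) ⧸ (maximalIdeal R • ⊤ : Submodule R ↥(maximalIdeal R)))
    have hsurj : Function.Surjective
        (Submodule.mkQ (maximalIdeal R • ⊤ : Submodule R ↥(maximalIdeal R))) :=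
      Submodule.mkQ_surjective _
    have hx : {x : Fin n → ↥(maximalIdeal R) //
        ∀ α, Submodule.mkQ (maximalIdeal R • ⊤ : Submodule R ↥(maximalIdeal R)) (x α) = bm α} :=
      ⟨fun α => Function.surjInv hsurj (bm α), fun α => Function.surjInv_eq hsurj _⟩
    obtain ⟨x, hxb⟩ := hx
    -- x generates m
    have hxspan : Submodule.span R (Set.range x) = ⊤ := by
      rw [span_range_iff_quot]
      have h2 : (fun α => Submodule.mkQ
          (maximalIdeal R • ⊤ : Submodule R ↥(maximalIdeal R)) (x α)) = ⇑bm := funext hxb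
      rw [h2, bm.span_eq]
    have hxI : Ideal.span (Set.range fun α => (x α : R)) = maximalIdeal R := by
      have h4 := congrArg (Submodule.map (maximalIdeal R).subtype) hxspan
      rwa [Submodule.map_span, ← Set.range_comp, Submodule.map_top, Submodule.range_subtype]
        at h4
    -- products generate m * Q
    have hsets : ((Set.range fun α => (x α : R)) * (Set.range a))
        = Set.range fun p : Fin d × Fin n => (x p.2 : R) * a p.1 := by
      ext z
      constructor
      · rintro ⟨u, ⟨α, rfl⟩, v, ⟨i, rfl⟩, rfl⟩
        exact ⟨(i, α), rfl⟩
      · rintro ⟨p, rfl⟩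
        exact Set.mul_mem_mul ⟨p.2, rfl⟩ ⟨p.1, rfl⟩
    have hprodI : Ideal.span (Set.range fun p : Fin d × Fin n => (x p.2 : R) * a p.1)
        = maximalIdeal R * Q := by
      rw [← hsets, ← Ideal.span_mul_span', hxI, ← hQ]
    set g : Fin d × Fin n → ↥(maximalIdeal R * Q) :=
      fun p => ⟨(x p.2 : R) * a p.1, Ideal.mul_mem_mul (x p.2).2 (haQ p.1)⟩ with hg
    have hgspan : Submodule.span R (Set.range g) = ⊤ := by
      apply Submodule.map_injective_of_injective (Submodule.injective_subtype (maximalIdeal R * Q))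
      rw [Submodule.map_span, ← Set.range_comp, Submodule.map_top, Submodule.range_subtype]
      exact hprodI
    set bg : Fin d × Fin n →
        (↥(maximalIdeal R * Q) ⧸ (maximalIdeal R • ⊤ : Submodule R ↥(maximalIdeal R * Q))) :=
      fun p => Submodule.mkQ (maximalIdeal R • ⊤ : Submodule R ↥(maximalIdeal R * Q)) (g p)
      with hbg
    have hbgspan : Submodule.span (R ⧸ maximalIdeal R) (Set.range bg) = ⊤ := by
      rw [hbg, ← span_range_iff_quot]
      exact hgspan
    have hbgind : LinearIndependent (R ⧸ maximalIdeal R) bg := by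
      rw [Fintype.linearIndependent_iff]
      intro c hc
      have hC : {C : Fin d × Fin n → R // ∀ p, Ideal.Quotient.mk (maximalIdeal R) (C p) = c p} :=
        ⟨fun p => Function.surjInv Ideal.Quotient.mk_surjective (c p),
          fun p => Function.surjInv_eq Ideal.Quotient.mk_surjective _⟩
      obtain ⟨C, hC⟩ := hC
      -- the key sum is in m • ⊤
      have hker : (∑ p, C p • g p) ∈
          (maximalIdeal R • ⊤ : Submodule R ↥(maximalIdeal R * Q)) := by
        rw [← Submodule.Quotient.mk_eq_zero]
        have h5 : Submodule.Quotient.mk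
            (p := (maximalIdeal R • ⊤ : Submodule R ↥(maximalIdeal R * Q)))
            (∑ p, C p • g p) = ∑ p, c p • bg p := by
          rw [show Submodule.Quotient.mk
              (p := (maximalIdeal R • ⊤ : Submodule R ↥(maximalIdeal R * Q)))
              (∑ p, C p • g p) = Submodule.mkQ _ (∑ p, C p • g p) from rfl, map_sum]
          refine Finset.sum_congr rfl fun p _ => ?_
          rw [map_smul, ← hC p, ← Ideal.Quotient.algebraMap_eq, algebraMap_smul]
        rw [h5, hc]
      -- translate to ideal membership
      have hco : ((∑ p, C p • g p : ↥(maximalIdeal R * Q)) : R)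
          = ∑ i : Fin d, (∑ α : Fin n, C (i, α) * (x α : R)) * a i := by
        push_cast
        rw [Fintype.sum_prod_type]
        refine Finset.sum_congr rfl fun i _ => ?_
        rw [Finset.sum_mul]
        refine Finset.sum_congr rfl fun α _ => ?_
        simp [hg, smul_eq_mul]
        ring
      have hmem2 : ((∑ p, C p • g p : ↥(maximalIdeal R * Q)) : R)
          ∈ (maximalIdeal R * maximalIdeal R) • Ideal.span (Set.range a) := by
        have h6 := (Submodule.mem_smul_top_iff (maximalIdeal R) (maximalIdeal R * Q) _).mp hker
        rw [smul_eq_mul, ← mul_assoc] at h6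
        rwa [smul_eq_mul, ← hQ]
      rw [hco] at hmem2
      obtain ⟨z, hz, hzs⟩ :=
        (Submodule.mem_ideal_smul_span_iff_exists_sum _ a _).mp hmem2
      set y : Fin d → R := fun i => ∑ α : Fin n, C (i, α) * (x α : R) with hy
      have hzsum : (∑ i, z i * a i) = ∑ i, y i * a i := by
        rw [← hzs, Finsupp.sum_fintype]
        · simp [smul_eq_mul]
        · intro i; simp
      have hzero : (∑ i, (y i - z i) * a i) = 0 := by
        have : (∑ i, (y i - z i) * a i) = (∑ i, y i * a i) - ∑ i, z i * a i := by
          rw [← Finset.sum_sub_distrib]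
          exact Finset.sum_congr rfl fun i _ => by ring
        rw [this, hzsum, sub_self]
      have hyQ : ∀ i, y i ∈ maximalIdeal R * maximalIdeal R := by
        intro i
        have h7 : y i - z i ∈ Q := hQ ▸ syz d a hweak _ hzero i
        have := hQmm h7
        have h8 : y i = (y i - z i) + z i := by ring
        rw [h8]
        exact add_mem this (hz i)
      -- conclude coefficients vanish
      intro p
      obtain ⟨i, α⟩ := p
      have hsumx : ((∑ β : Fin n, C (i, β) • x β : ↥(maximalIdeal R)) : R) = y i := by
        push_cast
        simp [hy, smul_eq_mul]
      have h9 : (∑ β : Fin n, C (i, β) • x β) ∈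
          (maximalIdeal R • ⊤ : Submodule R ↥(maximalIdeal R)) := by
        rw [Submodule.mem_smul_top_iff, hsumx, smul_eq_mul]
        exact hyQ i
      have h10 : (∑ β : Fin n, Ideal.Quotient.mk (maximalIdeal R) (C (i, β)) • bm β)
          = 0 := by
        have h11 : Submodule.mkQ (maximalIdeal R • ⊤ : Submodule R ↥(maximalIdeal R))
            (∑ β : Fin n, C (i, β) • x β) = 0 := by
          rw [Submodule.mkQ_apply, Submodule.Quotient.mk_eq_zero]
          exact h9
        rw [map_sum] at h11
        rw [← h11]
        refine Finset.sum_congr rfl fun β _ => ?_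
        rw [map_smul, hxb β, ← Ideal.Quotient.algebraMap_eq, algebraMap_smul]
      have h12 := Fintype.linearIndependent_iff.mp bm.linearIndependent
        (fun β => Ideal.Quotient.mk (maximalIdeal R) (C (i, β))) h10
      rw [← hC (i, α)]
      exact h12 α
    -- finish
    have hbasis : Module.finrank (R ⧸ maximalIdeal R)
        (↥(maximalIdeal R * Q) ⧸ (maximalIdeal R • ⊤ : Submodule R ↥(maximalIdeal R * Q)))
        = d * n := by
      have B := Module.Basis.mk hbgind (le_of_eq hbgspan.symm)
      rw [Module.finrank_eq_card_basis B, Fintype.card_prod, Fintype.card_fin, Fintype.card_fin]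
    rw [mu_eq_finrank (↥(maximalIdeal R * Q)), mu_eq_finrank (↥(maximalIdeal R)), hbasis]
end

section
/- Let (R, m) be a regular local ring of dimension d ≥ 2 with infinite residue field and let Q = (x₁, …, x_{d−1}, x_d^q) for a regular system of parameters x₁, …, x_d and an integer q ≥ 1. Then Q : m = (x₁, …, x_{d−1}, x_d^{q−1}) when q ≥ 1 (interpreting x_d⁰ = 1). -/
open IsLocalRing TensorProduct

section ArtAux

lemma my_isArtinian_of_torsion {R : Type*} [CommRing R] {M : Type*} [AddCommGroup M] [Module R M]
    [IsNoetherian R M] {m : Ideal R} (hm : m.IsMaximal)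
    (htor : Module.IsTorsionBySet R M (m : Set R)) : IsArtinian R M := by
  letI : Module (R ⧸ m) M := htor.module
  letI : Field (R ⧸ m) := Ideal.Quotient.field m
  haveI : IsScalarTower R (R ⧸ m) M := htor.isScalarTower
  haveI : Module.Finite R M := Module.finite_def.mpr (IsNoetherian.noetherian ⊤)
  haveI : Module.Finite (R ⧸ m) M := Module.Finite.of_restrictScalars_finite R (R ⧸ m) M
  haveI hart : IsArtinian (R ⧸ m) M := inferInstance
  set F : Submodule R M → Submodule (R ⧸ m) M := fun N =>
    { carrier := N
      add_mem' := fun h1 h2 => N.add_mem h1 h2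
      zero_mem' := N.zero_mem
      smul_mem' := by
        intro c x hx
        obtain ⟨r, rfl⟩ := Ideal.Quotient.mk_surjective c
        rw [htor.mk_smul]
        exact N.smul_mem r hx } with hFdef
  rw [isArtinian_iff]
  have hF : ∀ {a b : Submodule R M}, a < b → F a < F b := by
    intro a b hab
    rw [SetLike.lt_iff_le_and_exists] at hab ⊢
    obtain ⟨hle, z, hz1, hz2⟩ := hab
    exact ⟨fun w hw => hle hw, z, hz1, hz2⟩
  exact Subrelation.wf (fun {a b} h => hF h) (InvImage.wf F ((isArtinian_iff _ _).mp hart))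

lemma my_isArtinian_of_pow_smul {R : Type*} [CommRing R] {m : Ideal R} (hm : m.IsMaximal) :
    ∀ (t : ℕ) (M : Type*) [AddCommGroup M] [Module R M] [IsNoetherian R M],
      m ^ t • (⊤ : Submodule R M) = ⊥ → IsArtinian R M := by
  intro t
  induction t with
  | zero =>
    intro M _ _ _ h
    rw [pow_zero, Ideal.one_eq_top, Submodule.top_smul] at h
    haveI : Subsingleton M := by
      refine subsingleton_of_forall_eq 0 fun x => ?_
      have hx : x ∈ (⊤ : Submodule R M) := Submodule.mem_top
      rw [h] at hx
      simpa using hx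
    haveI : Finite M := Finite.of_subsingleton
    infer_instance
  | succ t ih =>
    intro M _ _ _ h
    set S : Submodule R M := m ^ t • ⊤ with hSdef
    have hS : m • S = ⊥ := by
      rw [hSdef, ← mul_smul, ← pow_succ']
      exact h
    haveI hart1 : IsArtinian R (M ⧸ S) := by
      apply ih (M ⧸ S)
      have h1 : m ^ t • (⊤ : Submodule R (M ⧸ S)) = Submodule.map S.mkQ S := by
        rw [← Submodule.range_mkQ S, ← Submodule.map_top, ← Submodule.map_smul'']
      rw [h1, eq_bot_iff, Submodule.map_le_iff_le_comap, Submodule.comap_bot, Submodule.ker_mkQ]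
    haveI hart2 : IsArtinian R S := by
      apply my_isArtinian_of_torsion hm
      intro x a
      have hmem : (a : R) • (x : M) ∈ m • S := Submodule.smul_mem_smul a.2 x.2
      rw [hS] at hmem
      exact Subtype.ext (by simpa using hmem)
    exact isArtinian_of_range_eq_ker S.subtype S.mkQ
      (by rw [Submodule.ker_mkQ, Submodule.range_subtype])

end ArtAux

section PITAux

open IsLocalRing

/-- Krull's principal ideal theorem, local form. -/
lemma my_pit (R : Type) [CommRing R] [IsLocalRing R] [IsNoetherianRing R] (α : R)
    (hα : α ∈ maximalIdeal R)
    (hrad : maximalIdeal R ≤ (Ideal.span {α}).radical)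
    (q : Ideal R) (hq : q.IsPrime) (hqm : q ≠ maximalIdeal R)
    (p : Ideal R) (hp : p.IsPrime) (hpq : p ≤ q) : p = q := by
  have hαq : α ∉ q := by
    intro h
    refine hqm (le_antisymm (IsLocalRing.le_maximalIdeal hq.ne_top) (le_trans hrad ?_))
    rw [← hq.radical]
    exact Ideal.radical_mono (Ideal.span_le.mpr (Set.singleton_subset_iff.mpr h))
  set Rq := Localization.AtPrime q with hRq
  have hnoeth : IsNoetherianRing Rq := IsLocalization.isNoetherianRing q.primeCompl Rq ‹_›
  set f := algebraMap R Rq with hf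
  set N : ℕ → Ideal Rq := fun n => (Ideal.map f q) ^ n with hN
  set C : ℕ → Ideal R := fun n => (N n).comap f with hC
  have hNanti : ∀ {a b : ℕ}, a ≤ b → N b ≤ N a := fun hab => Ideal.pow_le_pow_right hab
  have hCanti : ∀ {a b : ℕ}, a ≤ b → C b ≤ C a := fun hab => Ideal.comap_mono (hNanti hab)
  obtain ⟨t, ht⟩ := Ideal.exists_radical_pow_le_of_fg (Ideal.span {α}) (IsNoetherian.noetherian _)
  have hmt : maximalIdeal R ^ t ≤ Ideal.span {α} :=
    le_trans (Ideal.pow_right_mono hrad t) ht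
  set V : Submodule R R := (Ideal.span {α} : Ideal R) with hV
  haveI hartV : IsArtinian R (R ⧸ V) := by
    apply my_isArtinian_of_pow_smul (IsLocalRing.maximalIdeal.isMaximal R) t
    have h1 : maximalIdeal R ^ t • (⊤ : Submodule R (R ⧸ V)) = Submodule.map V.mkQ
        (maximalIdeal R ^ t • ⊤) := by
      rw [← Submodule.range_mkQ V, ← Submodule.map_top, ← Submodule.map_smul'']
    rw [h1, eq_bot_iff, Submodule.map_le_iff_le_comap, Submodule.comap_bot, Submodule.ker_mkQ]
    have h2 : maximalIdeal R ^ t • (⊤ : Submodule R R) = (maximalIdeal R ^ t : Ideal R) := by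
      rw [Ideal.smul_eq_mul, Ideal.mul_top]
    rw [h2]
    exact hmt
  set D : ℕ → Submodule R R := fun n => (C n : Submodule R R) ⊔ V with hD
  have hDanti : ∀ {a b : ℕ}, a ≤ b → D b ≤ D a := fun hab => sup_le_sup_right (hCanti hab) V
  set F : ℕ →o (Submodule R (R ⧸ V))ᵒᵈ :=
    ⟨fun n => OrderDual.toDual (Submodule.map V.mkQ (D n)),
     fun a b hab => Submodule.map_mono (hDanti hab)⟩ with hF2
  obtain ⟨n₁, hn₁⟩ := IsArtinian.monotone_stabilizes F
  set n₀ := n₁ + 1 with hn₀def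
  have hDeq : D n₀ = D (n₀ + 1) := by
    have h1 : F n₁ = F (n₀ + 1) := hn₁ (n₀+1) (by omega)
    have h2 : F n₁ = F n₀ := hn₁ n₀ (by omega)
    have h3 : Submodule.map V.mkQ (D n₀) = Submodule.map V.mkQ (D (n₀+1)) :=
      congrArg OrderDual.ofDual (h2.symm.trans h1)
    have h4 : ∀ k, Submodule.comap V.mkQ (Submodule.map V.mkQ (D k)) = D k := by
      intro k
      rw [Submodule.comap_map_eq, Submodule.ker_mkQ]
      exact sup_eq_left.mpr le_sup_right
    rw [← h4 n₀, ← h4 (n₀+1), h3]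
  have hCeq : C n₀ = C (n₀ + 1) := by
    refine le_antisymm ?_ (hCanti (by omega))
    have step : (C n₀ : Submodule R R) ≤ (C (n₀ + 1) : Submodule R R)
        ⊔ (maximalIdeal R) • (C n₀ : Submodule R R) := by
      intro c hc
      have hcD : c ∈ D (n₀ + 1) := by
        rw [← hDeq]; exact Submodule.mem_sup_left hc
      obtain ⟨d, hd, e, he, hde⟩ := Submodule.mem_sup.mp hcD
      obtain ⟨r, hr⟩ := Ideal.mem_span_singleton'.mp he
      have hec : e = c - d := by rw [← hde]; ring
      have hrα : r * α ∈ C n₀ := by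
        rw [hr, hec]
        exact Submodule.sub_mem _ hc (hCanti (by omega) hd)
      have hrC : r ∈ C n₀ := by
        have hu : IsUnit (f α) := (IsLocalization.AtPrime.isUnit_to_map_iff Rq q α).mpr hαq
        have hmem : f r * f α ∈ N n₀ := by
          rw [← map_mul]; exact hrα
        rw [hC]
        refine Ideal.mem_comap.mpr ?_
        obtain ⟨u, hu'⟩ := hu
        have heq : f r = f r * f α * ↑u⁻¹ := by
          rw [← hu', mul_assoc, Units.mul_inv, mul_one]
        rw [heq]
        exact Ideal.mul_mem_right _ _ hmem
      have hsm : e ∈ maximalIdeal R • (C n₀ : Submodule R R) := by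
        have h5 : α • r ∈ maximalIdeal R • (C n₀ : Submodule R R) :=
          Submodule.smul_mem_smul hα hrC
        have h6 : α • r = e := by rw [← hr, smul_eq_mul, mul_comm]
        rwa [h6] at h5
      rw [← hde]
      exact Submodule.add_mem_sup hd hsm
    have hj : maximalIdeal R ≤ Ideal.jacobson ⊥ :=
      le_of_eq (IsLocalRing.jacobson_eq_maximalIdeal ⊥ bot_ne_top).symm
    exact Submodule.le_of_le_smul_of_le_jacobson_bot (IsNoetherian.noetherian _) hj step
  have hNeq : N n₀ = N (n₀ + 1) := by
    have h1 : Ideal.map f (C n₀) = N n₀ := IsLocalization.map_comap q.primeCompl Rq (N n₀)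
    have h2 : Ideal.map f (C (n₀+1)) = N (n₀+1) := IsLocalization.map_comap q.primeCompl Rq (N (n₀+1))
    rw [← h1, ← h2, hCeq]
  have hmax : Ideal.map f q = maximalIdeal Rq := Localization.AtPrime.map_eq_maximalIdeal
  have hbot : N n₀ = ⊥ := by
    refine Submodule.eq_bot_of_le_smul_of_le_jacobson_bot (maximalIdeal Rq) _
      (IsNoetherian.noetherian _) ?_
      (le_of_eq (IsLocalRing.jacobson_eq_maximalIdeal ⊥ bot_ne_top).symm)
    calc N n₀ = N (n₀ + 1) := hNeq
      _ = Ideal.map f q • N n₀ := by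
          show Ideal.map f q ^ (n₀ + 1) = Ideal.map f q • Ideal.map f q ^ n₀
          rw [pow_succ', Ideal.smul_eq_mul]
      _ ≤ maximalIdeal Rq • N n₀ := Submodule.smul_mono_left (le_of_eq hmax)
  have hdisj : Disjoint (q.primeCompl : Set R) (p : Set R) :=
    Set.disjoint_left.mpr fun {a} ha hap => ha (hpq hap)
  have hmp : (Ideal.map f p).IsPrime :=
    IsLocalization.isPrime_of_isPrime_disjoint q.primeCompl Rq p hp hdisj
  have hmaxle : maximalIdeal Rq ≤ Ideal.map f p := by
    have hb2 : (Ideal.map f q ^ n₀ : Ideal Rq) = ⊥ := hbot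
    have h0 : maximalIdeal Rq ≤ ((⊥ : Ideal Rq)).radical := by
      rw [← hb2, Ideal.radical_pow _ (show n₀ ≠ 0 by omega), hmax]
      exact Ideal.le_radical
    exact le_trans h0 (hmp.radical_le_iff.mpr bot_le)
  have hpm : Ideal.map f p = maximalIdeal Rq :=
    le_antisymm (IsLocalRing.le_maximalIdeal hmp.ne_top) hmaxle
  have h1 : Ideal.comap f (Ideal.map f p) = p :=
    IsLocalization.comap_map_of_isPrime_disjoint q.primeCompl Rq hp hdisj
  rw [← h1, hpm]
  exact IsLocalization.AtPrime.comap_maximalIdeal Rq q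

end PITAux

section HeightAux

open IsLocalRing

/-- Krull's height theorem, local form. -/
lemma my_height_theorem : ∀ (n : ℕ) (R : Type) [CommRing R] [IsLocalRing R] [IsNoetherianRing R]
    (a : Fin n → R), (∀ i, a i ∈ maximalIdeal R) →
    maximalIdeal R ≤ (Ideal.span (Set.range a)).radical →
    ∀ l : LTSeries (PrimeSpectrum R), l.length ≤ n := by
  intro n
  induction n with
  | zero =>
    intro R _ _ _ a ha hrad l
    by_contra hcon
    push_neg at hcon
    have key : ∀ P : PrimeSpectrum R, P.asIdeal = maximalIdeal R := by
      intro P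
      refine le_antisymm (IsLocalRing.le_maximalIdeal P.isPrime.ne_top) (le_trans hrad ?_)
      have h0 : Set.range a = (∅ : Set R) := Set.range_eq_empty a
      rw [h0, Ideal.span_empty]
      exact P.isPrime.radical_le_iff.mpr bot_le
    have hstep := l.step ⟨0, hcon⟩
    have h2 := (PrimeSpectrum.asIdeal_lt_asIdeal _ _).mpr hstep
    rw [key, key] at h2
    exact lt_irrefl _ h2
  | succ n ih =>
    intro R _ _ _ a ha hrad l
    by_contra hcon
    push_neg at hcon
    have hk1 : l.length - 1 < l.length := by omega
    set k := l.length with hk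
    set Pp : PrimeSpectrum R := l.toFun ⟨k-1, by omega⟩ with hPp
    have hlast : Pp < l.toFun ⟨k, by omega⟩ := by
      have hstep := l.step ⟨k-1, hk1⟩
      have e2 : (Fin.succ ⟨k-1, hk1⟩ : Fin (k+1)) = ⟨k, by omega⟩ := by
        ext
        simp [Fin.succ]
        omega
      rwa [e2] at hstep
    have hPne : Pp.asIdeal ≠ maximalIdeal R := by
      intro h
      have h2 : (l.toFun ⟨k, by omega⟩).asIdeal ≤ maximalIdeal R :=
        IsLocalRing.le_maximalIdeal (l.toFun ⟨k, by omega⟩).isPrime.ne_top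
      have h3 : Pp.asIdeal < (l.toFun ⟨k, by omega⟩).asIdeal :=
        (PrimeSpectrum.asIdeal_lt_asIdeal _ _).mpr hlast
      rw [h] at h3
      exact lt_irrefl _ (lt_of_lt_of_le h3 h2)
    set T : Set (Ideal R) :=
      {J : Ideal R | J.IsPrime ∧ Pp.asIdeal ≤ J ∧ J ≠ maximalIdeal R} with hT
    have hsetmax := (set_has_maximal_iff_noetherian (R := R) (M := R)).mpr inferInstance
    have hTne : T.Nonempty := ⟨Pp.asIdeal, Pp.isPrime, le_rfl, hPne⟩
    obtain ⟨q'0, hq'T0, hq'max0⟩ := hsetmax T hTne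
    set q' : Ideal R := q'0 with hq'def
    have hq'T : q' ∈ T := hq'T0
    have hq'max : ∀ I ∈ T, ¬ q' < I := fun I hI h => hq'max0 I hI h
    obtain ⟨hq'p, hq'Pp, hq'ne⟩ := hq'T
    have hq'm : q' < maximalIdeal R :=
      lt_of_le_of_ne (IsLocalRing.le_maximalIdeal hq'p.ne_top) hq'ne
    have hsat : ∀ r : Ideal R, r.IsPrime → q' ≤ r → r ≠ maximalIdeal R → r = q' := by
      intro r hr hle hne
      by_contra hne2
      exact hq'max r ⟨hr, le_trans hq'Pp hle, hne⟩ (lt_of_le_of_ne hle (fun h => hne2 h.symm))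
    obtain ⟨i₀, hi₀⟩ : ∃ i, a i ∉ q' := by
      by_contra hall
      push_neg at hall
      have h1 : Ideal.span (Set.range a) ≤ q' :=
        Ideal.span_le.mpr (by rintro z ⟨i, rfl⟩; exact hall i)
      have h2 : maximalIdeal R ≤ q' :=
        le_trans hrad (by rw [← hq'p.radical]; exact Ideal.radical_mono h1)
      exact hq'ne (le_antisymm hq'm.le h2)
    set α := a i₀ with hαdef
    have hover : ∀ r : Ideal R, r.IsPrime → q' ⊔ Ideal.span {α} ≤ r →
        r = maximalIdeal R := by
      intro r hr hle
      by_contra hne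
      have h1 : r = q' := hsat r hr (le_trans le_sup_left hle) hne
      have h2 : α ∈ r := hle (Ideal.mem_sup_right (Ideal.mem_span_singleton_self α))
      rw [h1] at h2
      exact hi₀ h2
    have hrad2 : maximalIdeal R ≤ (q' ⊔ Ideal.span {α}).radical := by
      rw [Ideal.radical_eq_sInf]
      exact le_sInf fun J hJ => (hover J hJ.2 hJ.1) ▸ le_rfl
    have hchoose : ∀ i : Fin (n+1), ∃ (e : ℕ) (b c : R),
        b ∈ q' ∧ a i ^ e = b + c * α := by
      intro i
      obtain ⟨e, he⟩ := Ideal.mem_radical_iff.mp (hrad2 (ha i))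
      obtain ⟨y, hy, z, hz, hyz⟩ := Submodule.mem_sup.mp he
      obtain ⟨cz, hcz⟩ := Ideal.mem_span_singleton'.mp hz
      exact ⟨e, y, cz, hy, by rw [← hyz, hcz]⟩
    choose ee bb cc hbb heqn using hchoose
    set B : Ideal R := Ideal.span (Set.range (fun j : Fin n => bb (i₀.succAbove j))) with hB
    have hoverB : ∀ r : Ideal R, r.IsPrime → B ⊔ Ideal.span {α} ≤ r → r = maximalIdeal R := by
      intro r hr hle
      have hαr : α ∈ r := hle (Ideal.mem_sup_right (Ideal.mem_span_singleton_self α))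
      have hai : ∀ i : Fin (n+1), a i ∈ r := by
        intro i
        rcases eq_or_ne i i₀ with rfl | hne
        · exact hαr
        · obtain ⟨j, rfl⟩ := Fin.exists_succAbove_eq hne
          have h1 : bb (i₀.succAbove j) ∈ r :=
            hle (Ideal.mem_sup_left (Ideal.subset_span ⟨j, rfl⟩))
          have h2 : a (i₀.succAbove j) ^ ee (i₀.succAbove j) ∈ r := by
            rw [heqn]
            exact Ideal.add_mem _ h1 (Ideal.mul_mem_left _ _ hαr)
          exact hr.mem_of_pow_mem _ h2
      have h3 : Ideal.span (Set.range a) ≤ r :=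
        Ideal.span_le.mpr (by rintro z ⟨i, rfl⟩; exact hai i)
      have h4 : maximalIdeal R ≤ r :=
        le_trans hrad (by rw [← hr.radical]; exact Ideal.radical_mono h3)
      exact le_antisymm (IsLocalRing.le_maximalIdeal hr.ne_top) h4
    have hmin : ∀ p : Ideal R, p.IsPrime → B ≤ p → p ≤ q' → p = q' := by
      intro p hp hBp hpq'
      by_contra hne
      have hplt : p < q' := lt_of_le_of_ne hpq' hne
      haveI hpI : p.IsPrime := hp
      set Rb := R ⧸ p with hRb
      haveI : Nontrivial Rb := Ideal.Quotient.nontrivial_iff.mpr hp.ne_top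
      haveI : IsLocalRing Rb :=
        IsLocalRing.of_surjective' (Ideal.Quotient.mk p) Ideal.Quotient.mk_surjective
      haveI : IsNoetherianRing Rb := inferInstance
      set g := Ideal.Quotient.mk p with hg
      have hpm : p ≤ maximalIdeal R := le_trans hpq' hq'm.le
      have hmemmax : ∀ s : R, s ∈ maximalIdeal R → g s ∈ maximalIdeal Rb := by
        intro s hs
        rw [IsLocalRing.mem_maximalIdeal, mem_nonunits_iff]
        intro hu
        obtain ⟨v, hv⟩ := isUnit_iff_exists_inv.mp hu
        obtain ⟨w, rfl⟩ := Ideal.Quotient.mk_surjective v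
        rw [← map_mul, ← map_one g, Ideal.Quotient.eq] at hv
        have h1 : (1 : R) = s * w - (s * w - 1) := by ring
        have h2 : (1:R) ∈ maximalIdeal R := by
          rw [h1]; exact Submodule.sub_mem _ (Ideal.mul_mem_right w _ hs) (hpm hv)
        exact (IsLocalRing.maximalIdeal.isMaximal R).ne_top ((Ideal.eq_top_iff_one _).mpr h2)
      have hmemmax' : ∀ s : R, g s ∈ maximalIdeal Rb → s ∈ maximalIdeal R := by
        intro s hs
        rw [IsLocalRing.mem_maximalIdeal, mem_nonunits_iff] at hs ⊢
        exact fun hu => hs (hu.map g)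
      have hradp : maximalIdeal R ≤ (p ⊔ Ideal.span {α}).radical := by
        rw [Ideal.radical_eq_sInf]
        refine le_sInf fun J hJ => ?_
        have h5 := hoverB J hJ.2 (le_trans (sup_le_sup_right hBp _) hJ.1)
        exact h5 ▸ le_rfl
      have h1 : g α ∈ maximalIdeal Rb := hmemmax α (ha i₀)
      have h2 : maximalIdeal Rb ≤ (Ideal.span {g α}).radical := by
        intro z hz
        obtain ⟨s, rfl⟩ := Ideal.Quotient.mk_surjective z
        have hs : s ∈ maximalIdeal R := hmemmax' s hz
        obtain ⟨e, he⟩ := Ideal.mem_radical_iff.mp (hradp hs)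
        obtain ⟨y, hy, w, hw, hyw⟩ := Submodule.mem_sup.mp he
        obtain ⟨cw, hcw⟩ := Ideal.mem_span_singleton'.mp hw
        rw [Ideal.mem_radical_iff]
        refine ⟨e, ?_⟩
        have h6 : g s ^ e = g (s ^ e) := (map_pow g s e).symm
        have hy0 : g y = 0 := Ideal.Quotient.eq_zero_iff_mem.mpr hy
        rw [h6, ← hyw, map_add, hy0, zero_add, ← hcw, map_mul]
        exact Ideal.mul_mem_left _ _ (Ideal.mem_span_singleton_self (g α))
      haveI hq'pI2 : q'.IsPrime := hq'p
      have hq'' : (Ideal.map g q').IsPrime := by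
        apply Ideal.map_isPrime_of_surjective Ideal.Quotient.mk_surjective
        rw [Ideal.mk_ker]; exact hplt.le
      have hq''ne : Ideal.map g q' ≠ maximalIdeal Rb := by
        intro hE
        obtain ⟨s, hsm, hsq⟩ := SetLike.exists_of_lt hq'm
        have h3 : g s ∈ maximalIdeal Rb := hmemmax s hsm
        rw [← hE] at h3
        have h4 : s ∈ Ideal.comap g (Ideal.map g q') := Ideal.mem_comap.mpr h3
        rw [Ideal.comap_map_of_surjective g Ideal.Quotient.mk_surjective] at h4
        have h5 : Ideal.comap g ⊥ = p := by
          rw [← RingHom.ker_eq_comap_bot, Ideal.mk_ker]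
        rw [h5, sup_eq_left.mpr hpq'] at h4
        exact hsq h4
      have hbotp : (⊥ : Ideal Rb).IsPrime := Ideal.bot_prime
      have hpitres := my_pit Rb (g α) h1 h2 (Ideal.map g q') hq'' hq''ne ⊥ hbotp bot_le
      have hq'p' : q' ≤ p := by
        intro w hw
        have h6 : g w ∈ Ideal.map g q' := Ideal.mem_map_of_mem g hw
        rw [← hpitres] at h6
        have h7 : g w = 0 := h6
        exact Ideal.Quotient.eq_zero_iff_mem.mp h7
      exact hne (le_antisymm hpq' hq'p')
    haveI hq'pI : q'.IsPrime := hq'p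
    set Rq := Localization.AtPrime q' with hRq
    haveI : IsNoetherianRing Rq :=
      IsLocalization.isNoetherianRing q'.primeCompl Rq ‹_›
    set f := algebraMap R Rq with hf
    set b' : Fin n → Rq := fun j => f (bb (i₀.succAbove j)) with hb'
    have hb'm : ∀ j, b' j ∈ maximalIdeal Rq := fun j =>
      (IsLocalization.AtPrime.to_map_mem_maximal_iff Rq q' _).mpr (hbb _)
    have hb'rad : maximalIdeal Rq ≤ (Ideal.span (Set.range b')).radical := by
      rw [Ideal.radical_eq_sInf]
      refine le_sInf fun J hJ => ?_
      obtain ⟨hle, hJp⟩ := hJ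
      set Jc := Ideal.comap f J with hJcdef
      haveI hJcp : Jc.IsPrime := hJp.comap f
      have hJcq' : Jc ≤ q' := by
        have h7 : J ≤ maximalIdeal Rq := IsLocalRing.le_maximalIdeal hJp.ne_top
        have h8 := Ideal.comap_mono (f := f) h7
        exact h8.trans (le_of_eq (IsLocalization.AtPrime.comap_maximalIdeal Rq q'))
      have hBJc : B ≤ Jc := by
        rw [hB, Ideal.span_le]
        rintro z ⟨j, rfl⟩
        exact Ideal.mem_comap.mpr (hle (Ideal.subset_span ⟨j, rfl⟩))
      have h9 : Jc = q' := hmin Jc hJcp hBJc hJcq'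
      have h10 : Ideal.map f Jc ≤ J := Ideal.map_comap_le
      rw [h9, Localization.AtPrime.map_eq_maximalIdeal] at h10
      exact h10
    set φ := (IsLocalization.AtPrime.orderIsoOfPrime Rq q').symm with hφ
    have hsz : k - 1 + 1 ≤ k + 1 := by omega
    have hleq : ∀ i : Fin (k - 1 + 1), (l.toFun (Fin.castLE hsz i)).asIdeal ≤ q' := by
      intro i
      refine le_trans ?_ hq'Pp
      refine (PrimeSpectrum.asIdeal_le_asIdeal _ _).mpr (l.monotone ?_)
      show (Fin.castLE hsz i : Fin (k+1)) ≤ ⟨k-1, by omega⟩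
      rw [Fin.le_def]
      have := i.isLt
      simp only [Fin.coe_castLE]
      omega
    set F : Fin (k - 1 + 1) → PrimeSpectrum Rq := fun i =>
      ⟨(φ ⟨(l.toFun (Fin.castLE hsz i)).asIdeal, (l.toFun (Fin.castLE hsz i)).isPrime, hleq i⟩).1,
        (φ ⟨(l.toFun (Fin.castLE hsz i)).asIdeal, (l.toFun (Fin.castLE hsz i)).isPrime,
          hleq i⟩).2⟩ with hF
    have hFmono : ∀ {i j : Fin (k-1+1)}, i < j → F i < F j := by
      intro i j hij
      have hij' : (Fin.castLE hsz i) < (Fin.castLE hsz j) := by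
        rw [Fin.lt_def] at hij ⊢
        simpa using hij
      have hlt : l.toFun (Fin.castLE hsz i) < l.toFun (Fin.castLE hsz j) := l.strictMono hij'
      have hlt2 : (⟨(l.toFun (Fin.castLE hsz i)).asIdeal, (l.toFun (Fin.castLE hsz i)).isPrime,
            hleq i⟩ : {pp : Ideal R // pp.IsPrime ∧ pp ≤ q'})
          < ⟨(l.toFun (Fin.castLE hsz j)).asIdeal, (l.toFun (Fin.castLE hsz j)).isPrime,
            hleq j⟩ := by
        rw [Subtype.mk_lt_mk]
        exact (PrimeSpectrum.asIdeal_lt_asIdeal _ _).mpr hlt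
      rw [hF, ← PrimeSpectrum.asIdeal_lt_asIdeal]
      exact Subtype.coe_lt_coe.mpr (φ.strictMono hlt2)
    set l' : LTSeries (PrimeSpectrum Rq) := ⟨k-1, F, fun i => hFmono (Fin.castSucc_lt_succ (i := i))⟩
      with hl'
    have hlen := ih Rq b' hb'm hb'rad l'
    have hl'len : l'.length = k - 1 := rfl
    omega

end HeightAux

theorem socle_of_integrally_closed_parameter
    (R : Type) [CommRing R] [IsLocalRing R] (hreg : IsRegularLocalRingP R)
    (d : ℕ) (hd : 2 ≤ d) (hdim : ringKrullDim R = (d : ℕ))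
    (hres : Infinite (ResidueField R))
    (x : Fin d → R) (hx : maximalIdeal R = Ideal.span (Set.range x))
    (q : ℕ) (hq : 1 ≤ q)
    (Q : Ideal R)
    (hQ : Q = Ideal.span ((x '' {j | (j : ℕ) < d - 1}) ∪ {x ⟨d - 1, by omega⟩ ^ q})) :
    Q.colon (maximalIdeal R)
      = Ideal.span ((x '' {j | (j : ℕ) < d - 1}) ∪ {x ⟨d - 1, by omega⟩ ^ (q - 1)}) := by
  classical
  obtain ⟨hNoeth, -⟩ := hreg
  haveI : IsNoetherianRing R := hNoeth
  subst hQ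
  set y : R := x ⟨d - 1, by omega⟩ with hy
  set A : Set R := x '' {j | (j : ℕ) < d - 1} with hA
  set J : Ideal R := Ideal.span A with hJ
  have hxm : ∀ i, x i ∈ maximalIdeal R := fun i => by
    rw [hx]; exact Ideal.subset_span ⟨i, rfl⟩
  have hym : y ∈ maximalIdeal R := hxm _
  have hJm : J ≤ maximalIdeal R := Ideal.span_le.mpr (by rintro z ⟨i, hi, rfl⟩; exact hxm i)
  have hJtop : J ≠ ⊤ := fun h =>
    (IsLocalRing.maximalIdeal.isMaximal R).ne_top (eq_top_iff.mpr (h ▸ hJm))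
  set S := R ⧸ J with hS
  haveI : Nontrivial S := Ideal.Quotient.nontrivial_iff.mpr hJtop
  haveI : IsLocalRing S :=
    IsLocalRing.of_surjective' (Ideal.Quotient.mk J) Ideal.Quotient.mk_surjective
  haveI : IsNoetherianRing S := inferInstance
  set g := Ideal.Quotient.mk J with hg
  have hmemmax : ∀ s : R, s ∈ maximalIdeal R → g s ∈ maximalIdeal S := by
    intro s hs
    rw [IsLocalRing.mem_maximalIdeal, mem_nonunits_iff]
    intro hu
    obtain ⟨v, hv⟩ := isUnit_iff_exists_inv.mp hu
    obtain ⟨w, rfl⟩ := Ideal.Quotient.mk_surjective v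
    rw [← map_mul, ← map_one g, Ideal.Quotient.eq] at hv
    have h1 : (1 : R) = s * w - (s * w - 1) := by ring
    have h2 : (1:R) ∈ maximalIdeal R := by
      rw [h1]; exact Submodule.sub_mem _ (Ideal.mul_mem_right w _ hs) (hJm hv)
    exact (IsLocalRing.maximalIdeal.isMaximal R).ne_top ((Ideal.eq_top_iff_one _).mpr h2)
  have hmemmax' : ∀ s : R, g s ∈ maximalIdeal S → s ∈ maximalIdeal R := by
    intro s hs
    rw [IsLocalRing.mem_maximalIdeal, mem_nonunits_iff] at hs ⊢
    exact fun hu => hs (hu.map g)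
  have hgA : ∀ z ∈ A, g z = 0 := fun z hz =>
    Ideal.Quotient.eq_zero_iff_mem.mpr (Ideal.subset_span hz)
  have hxcase : ∀ i : Fin d, x i ∈ A ∨ x i = y := by
    intro i
    rcases lt_or_ge (i : ℕ) (d - 1) with h | h
    · exact Or.inl ⟨i, h, rfl⟩
    · refine Or.inr ?_
      have : i = (⟨d - 1, by omega⟩ : Fin d) := Fin.ext (by have := i.isLt; simp; omega)
      rw [this, hy]
  have hnS : maximalIdeal S = Ideal.span {g y} := by
    refine le_antisymm ?_ ?_
    · intro z hz
      obtain ⟨s, rfl⟩ := Ideal.Quotient.mk_surjective z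
      have hs : s ∈ maximalIdeal R := hmemmax' s hz
      rw [hx] at hs
      have h1 : g s ∈ Ideal.map g (Ideal.span (Set.range x)) := Ideal.mem_map_of_mem g hs
      rw [Ideal.map_span] at h1
      refine (Ideal.span_le.mpr ?_) h1
      rintro w ⟨v, ⟨i, rfl⟩, rfl⟩
      rcases hxcase i with h | h
      · rw [hgA _ h]; exact Ideal.zero_mem _
      · rw [h]; exact Ideal.subset_span rfl
    · rw [Ideal.span_le, Set.singleton_subset_iff]
      exact hmemmax y hym
  have hmapspan : ∀ m : ℕ, Ideal.map g (Ideal.span (A ∪ {y ^ m})) = Ideal.span {g y ^ m} := by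
    intro m
    rw [Ideal.map_span]
    refine le_antisymm (Ideal.span_le.mpr ?_) (Ideal.span_le.mpr ?_)
    · rintro w ⟨v, hv, rfl⟩
      rcases hv with hv | hv
      · rw [hgA _ hv]; exact Ideal.zero_mem _
      · rw [Set.mem_singleton_iff] at hv; subst hv
        rw [map_pow]
        exact Ideal.subset_span rfl
    · intro w hw
      rw [Set.mem_singleton_iff] at hw; subst hw
      rw [SetLike.mem_coe, ← map_pow]
      exact Ideal.subset_span ⟨y ^ m, Or.inr rfl, rfl⟩
  have hynil : ∀ m : ℕ, g y ^ m ≠ 0 := by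
    intro m hm
    have h1 : y ^ m ∈ J := by
      rw [← Ideal.Quotient.eq_zero_iff_mem, map_pow]
      exact hm
    have h2 : maximalIdeal R ≤ J.radical := by
      rw [hx, Ideal.span_le]
      rintro z ⟨i, rfl⟩
      rcases hxcase i with h | h
      · exact Ideal.le_radical (Ideal.subset_span h)
      · rw [SetLike.mem_coe, h, Ideal.mem_radical_iff]
        exact ⟨m, h1⟩
    set aa : Fin (d-1) → R := fun j => x ⟨j.val, by have := j.isLt; omega⟩ with haa
    have haam : ∀ j, aa j ∈ maximalIdeal R := fun j => hxm _
    have haaspan : Ideal.span (Set.range aa) = J := by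
      rw [hJ, hA]
      congr 1
      ext z
      constructor
      · rintro ⟨j, rfl⟩
        exact ⟨⟨j.val, by have := j.isLt; omega⟩,
          by simp only [Set.mem_setOf_eq]; have := j.isLt; omega, rfl⟩
      · rintro ⟨i, hi, rfl⟩
        have hi' : (i : ℕ) < d - 1 := hi
        refine ⟨⟨i.val, hi'⟩, ?_⟩
        exact congrArg x (Fin.ext rfl)
    have hrad : maximalIdeal R ≤ (Ideal.span (Set.range aa)).radical := by
      rw [haaspan]; exact h2
    have hbound := my_height_theorem (d-1) R aa haam hrad
    haveI : Nonempty (PrimeSpectrum R) := inferInstance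
    have hd2 : ringKrullDim R ≤ (((d-1 : ℕ) : ℕ∞) : WithBot ℕ∞) := by
      rw [ringKrullDim, Order.krullDim_eq_iSup_length]
      rw [WithBot.coe_le_coe]
      exact iSup_le fun p => by exact_mod_cast hbound p
    rw [hdim] at hd2
    have hd3 : ((d:ℕ∞) : WithBot ℕ∞) ≤ (((d - 1 : ℕ) : ℕ∞) : WithBot ℕ∞) := hd2
    have hd4 : d ≤ d - 1 := Nat.cast_le.mp (WithBot.coe_le_coe.mp hd3)
    omega
  have hyreg : ∀ c : S, c * g y = 0 → c = 0 := by
    intro c hc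
    by_contra hc0
    have hiInf : (⨅ m : ℕ, Ideal.span {g y} ^ m) = ⊥ := by
      apply Ideal.iInf_pow_eq_bot_of_isLocalRing
      intro htop
      exact (IsLocalRing.maximalIdeal.isMaximal S).ne_top (by rw [hnS, htop])
    have hex : ∃ m : ℕ, c ∉ Ideal.span {g y} ^ m := by
      by_contra hall
      push_neg at hall
      have : c ∈ (⨅ m : ℕ, Ideal.span {g y} ^ m) := Submodule.mem_iInf _ |>.mpr hall
      rw [hiInf] at this
      exact hc0 (by simpa using this)
    set m₀ := Nat.find hex with hm₀
    have hm₀spec : c ∉ Ideal.span {g y} ^ m₀ := Nat.find_spec hex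
    have hm₀pos : 0 < m₀ := by
      rcases Nat.eq_zero_or_pos m₀ with h | h
      · exfalso
        apply hm₀spec
        rw [h, pow_zero, Ideal.one_eq_top]
        trivial
      · exact h
    obtain ⟨e, he⟩ : ∃ e, m₀ = e + 1 := ⟨m₀ - 1, by omega⟩
    have hprev : c ∈ Ideal.span {g y} ^ e := not_not.mp (Nat.find_min hex (by omega))
    rw [Ideal.span_singleton_pow, Ideal.mem_span_singleton'] at hprev
    obtain ⟨b, hb⟩ := hprev
    have hbu : IsUnit b := by
      by_contra hbu
      have hbm : b ∈ maximalIdeal S := by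
        rw [IsLocalRing.mem_maximalIdeal, mem_nonunits_iff]
        exact hbu
      rw [hnS, Ideal.mem_span_singleton'] at hbm
      obtain ⟨b2, hb2⟩ := hbm
      apply hm₀spec
      rw [Ideal.span_singleton_pow, Ideal.mem_span_singleton']
      refine ⟨b2, ?_⟩
      rw [he]
      calc b2 * g y ^ (e + 1) = (b2 * g y) * g y ^ e := by ring
        _ = b * g y ^ e := by rw [hb2]
        _ = c := hb
    have h2 : b * g y ^ (e + 1) = 0 := by
      rw [pow_succ, ← mul_assoc, hb]
      exact hc
    exact hynil (e+1) ((hbu.mul_right_eq_zero).mp h2)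
  refine le_antisymm ?_ ?_
  · intro f hf
    have hfy : f * y ∈ Ideal.span (A ∪ {y ^ q}) := by
      have h0 := Submodule.mem_colon.mp hf y hym
      simpa [smul_eq_mul] using h0
    have h1 : g (f * y) ∈ Ideal.map g (Ideal.span (A ∪ {y ^ q})) := Ideal.mem_map_of_mem g hfy
    rw [hmapspan q, map_mul, Ideal.mem_span_singleton'] at h1
    obtain ⟨cc, hcc⟩ := h1
    have hqq : g y ^ q = g y ^ (q-1) * g y := by
      rw [← pow_succ]
      congr 1
      omega
    have h2 : (g f - cc * g y ^ (q - 1)) * g y = 0 := by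
      calc (g f - cc * g y ^ (q-1)) * g y = g f * g y - cc * (g y ^ (q-1) * g y) := by ring
        _ = g f * g y - cc * g y ^ q := by rw [← hqq]
        _ = 0 := by rw [← hcc]; ring
    have h3 : g f = cc * g y ^ (q-1) := sub_eq_zero.mp (hyreg _ h2)
    have h5 : g f ∈ Ideal.span {g y ^ (q-1)} := by
      rw [Ideal.mem_span_singleton']
      exact ⟨cc, h3.symm⟩
    rw [← hmapspan (q-1)] at h5
    have h6 : f ∈ Ideal.comap g (Ideal.map g (Ideal.span (A ∪ {y ^ (q-1)}))) :=
      Ideal.mem_comap.mpr h5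
    rw [Ideal.comap_map_of_surjective g Ideal.Quotient.mk_surjective,
      ← RingHom.ker_eq_comap_bot, Ideal.mk_ker] at h6
    have h7 : J ≤ Ideal.span (A ∪ {y ^ (q-1)}) := by
      rw [hJ]; exact Ideal.span_mono Set.subset_union_left
    rwa [sup_eq_left.mpr h7] at h6
  · rw [Ideal.span_le]
    intro z hz
    have hkey : ∀ i : Fin d, x i * z ∈ Ideal.span (A ∪ {y ^ q}) := by
      intro i
      rcases hz with hz | hz
      · exact Ideal.mul_mem_left _ _ (Ideal.subset_span (Or.inl hz))
      · rw [Set.mem_singleton_iff] at hz; subst hz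
        rcases hxcase i with h | h
        · exact Ideal.mul_mem_right _ _ (Ideal.subset_span (Or.inl h))
        · rw [h]
          have hyy : y * y ^ (q-1) = y ^ q := by
            rw [← pow_succ']
            congr 1
            omega
          rw [hyy]
          exact Ideal.subset_span (Or.inr rfl)
    have hcsub : maximalIdeal R ≤ (Ideal.span (A ∪ {y ^ q})).colon (Ideal.span {z}) := by
      rw [hx, Ideal.span_le]
      rintro w ⟨i, rfl⟩
      rw [SetLike.mem_coe, Ideal.mem_colon_span_singleton]
      exact hkey i
    rw [SetLike.mem_coe, Submodule.mem_colon]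
    intro p hp
    have h8 := hcsub hp
    rw [Ideal.mem_colon_span_singleton] at h8
    rw [smul_eq_mul, mul_comm]
    exact h8
end
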